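/- Let G be a connected d-regular finite simple undirected graph on vertex set {1,…,N} (d ≥ 1) with adjacency matrix A, and let p ∈ (0,1]. Then the rank of the matrix d·I − p·A − ((1−p)/d)·A² equals N − 1. -/

import Mathlib

open Matrix

/-- For a connected `d`-regular graph (`d ≥ 1`) and `p ∈ (0,1]`, the rank of
`d·I − p·A − ((1−p)/d)·A²` equals `N − 1`. -/
theorem stmt_10 (N d : ℕ) (hd : 1 ≤ d) (G : SimpleGraph (Fin N)) [DecidableRel G.Adj]
    (hconn : G.Connected) (hreg : G.IsRegularOfDegree d)
    (p : ℝ) (hp0 : 0 < p) (hp1 : p ≤ 1) :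
    ((d : ℝ) • (1 : Matrix (Fin N) (Fin N) ℝ) - p • G.adjMatrix ℝ
      - ((1 - p) / (d : ℝ)) • (G.adjMatrix ℝ) ^ 2).rank = N - 1 := by
  have hne : Nonempty (Fin N) := hconn.nonempty
  have hd0 : (0:ℝ) < (d:ℝ) := by exact_mod_cast hd
  set A : Matrix (Fin N) (Fin N) ℝ := G.adjMatrix ℝ with hA
  set c : ℝ := (1 - p) / (d : ℝ) with hc
  have hc0 : 0 ≤ c := div_nonneg (by linarith) hd0.le
  set M : Matrix (Fin N) (Fin N) ℝ :=
    (d : ℝ) • (1 : Matrix (Fin N) (Fin N) ℝ) - p • A - c • A ^ 2 with hM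
  -- pointwise formula for M *ᵥ x
  have hMv : ∀ (x : Fin N → ℝ) (i : Fin N),
      (M *ᵥ x) i = (d : ℝ) * x i - p * (A *ᵥ x) i - c * (A *ᵥ (A *ᵥ x)) i := by
    intro x i
    simp [hM, sub_mulVec, smul_mulVec, one_mulVec, pow_two,
      ← mulVec_mulVec, smul_eq_mul]
  -- row-sum bound
  have hbound : ∀ (z : Fin N → ℝ) (b : ℝ), (∀ k, z k ≤ b) → ∀ i, (A *ᵥ z) i ≤ (d : ℝ) * b := by
    intro z b hz i
    rw [hA, SimpleGraph.adjMatrix_mulVec_apply]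
    calc ∑ u ∈ G.neighborFinset i, z u ≤ ∑ u ∈ G.neighborFinset i, b :=
          Finset.sum_le_sum fun u _ => hz u
      _ = (G.neighborFinset i).card * b := by rw [Finset.sum_const, nsmul_eq_mul]
      _ = (d : ℝ) * b := by rw [G.card_neighborFinset_eq_degree, hreg i]
  -- constant vectors are in the kernel
  have hconst : M *ᵥ (fun _ => (1:ℝ)) = 0 := by
    funext i
    rw [hMv]
    have hcv : ∀ (a : ℝ) (j : Fin N), (A *ᵥ (fun _ => a)) j = (d : ℝ) * a := by
      intro a j
      rw [hA, SimpleGraph.adjMatrix_mulVec_apply, Finset.sum_const, nsmul_eq_mul,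
        G.card_neighborFinset_eq_degree, hreg j]
    have h2 : (A *ᵥ (fun _ => (1:ℝ))) = (fun _ => (d:ℝ)) := by
      funext j; rw [hcv]; ring
    rw [h2, hcv, hc]
    simp only [Pi.zero_apply]
    field_simp
    ring
  -- kernel vectors are constant
  have hker_const : ∀ x : Fin N → ℝ, M *ᵥ x = 0 → ∃ a : ℝ, x = fun _ => a := by
    intro x hx
    obtain ⟨i₀, -, hi₀⟩ := Finset.exists_max_image Finset.univ x ⟨Classical.arbitrary _,
      Finset.mem_univ _⟩
    set m := x i₀ with hm
    have hmax : ∀ j, x j ≤ m := fun j => hi₀ j (Finset.mem_univ j)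
    -- maximum principle step
    have key : ∀ i, x i = m → ∀ j, G.Adj i j → x j = m := by
      intro i hi j hij
      have hxi := congrFun hx i
      rw [hMv] at hxi
      simp only [Pi.zero_apply] at hxi
      have h1 : (A *ᵥ x) i ≤ (d : ℝ) * m := hbound x m hmax i
      have h2 : (A *ᵥ (A *ᵥ x)) i ≤ (d : ℝ) * ((d : ℝ) * m) :=
        hbound (A *ᵥ x) ((d:ℝ) * m) (fun k => hbound x m hmax k) i
      have hcd : c * (d : ℝ) = 1 - p := by rw [hc, div_mul_cancel₀ _ hd0.ne']
      -- deduce (A *ᵥ x) i = d * m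
      have heq : (A *ᵥ x) i = (d : ℝ) * m := by
        have hle2 : c * (A *ᵥ (A *ᵥ x)) i ≤ (1 - p) * ((d:ℝ) * m) := by
          calc c * (A *ᵥ (A *ᵥ x)) i ≤ c * ((d : ℝ) * ((d : ℝ) * m)) :=
                mul_le_mul_of_nonneg_left h2 hc0
            _ = (1 - p) * ((d:ℝ) * m) := by rw [← mul_assoc, hcd]
        nlinarith [mul_le_mul_of_nonneg_left h1 hp0.le]
      -- so each neighbor attains the maximum
      have hsum : ∑ u ∈ G.neighborFinset i, (m - x u) = 0 := by
        rw [Finset.sum_sub_distrib, Finset.sum_const, nsmul_eq_mul,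
          G.card_neighborFinset_eq_degree, hreg i]
        have : ∑ u ∈ G.neighborFinset i, x u = (d:ℝ) * m := by
          rw [← heq, hA, SimpleGraph.adjMatrix_mulVec_apply]
        rw [this]; ring
      have hall := (Finset.sum_eq_zero_iff_of_nonneg
        (fun u _ => sub_nonneg.2 (hmax u))).1 hsum
      have hj : j ∈ G.neighborFinset i := by
        rw [SimpleGraph.mem_neighborFinset]; exact hij
      have := hall j hj
      linarith [sub_eq_zero.1 this]
    -- propagate along walks
    have walk : ∀ (u v : Fin N) (w : G.Walk u v), x u = m → x v = m := by
      intro u v w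
      induction w with
      | nil => exact id
      | cons h w ih => intro hu; exact ih (key _ hu _ h)
    refine ⟨m, funext fun j => ?_⟩
    obtain ⟨w⟩ := hconn i₀ j
    exact walk i₀ j w rfl
  -- kernel = span of the constant vector
  have hker : LinearMap.ker M.mulVecLin = Submodule.span ℝ {(fun _ => (1:ℝ) : Fin N → ℝ)} := by
    apply le_antisymm
    · intro x hx
      rw [LinearMap.mem_ker, mulVecLin_apply] at hx
      obtain ⟨a, rfl⟩ := hker_const x hx
      exact Submodule.mem_span_singleton.2 ⟨a, by funext i; simp⟩
    · rw [Submodule.span_le, Set.singleton_subset_iff]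
      rw [SetLike.mem_coe, LinearMap.mem_ker, mulVecLin_apply]
      exact hconst
  have h1ne : (fun _ => (1:ℝ) : Fin N → ℝ) ≠ 0 := by
    intro h
    have := congrFun h (Classical.arbitrary _)
    simp at this
  have hdim : Module.finrank ℝ (LinearMap.ker M.mulVecLin) = 1 := by
    rw [hker, finrank_span_singleton h1ne]
  have hrn := LinearMap.finrank_range_add_finrank_ker M.mulVecLin
  rw [hdim, Module.finrank_pi] at hrn
  have hrank : M.rank = Module.finrank ℝ (LinearMap.range M.mulVecLin) := rfl
  rw [hrank]
  simp only [Fintype.card_fin] at hrn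
  omega
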